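/- Suppose the UN one-step map f is a k-equilibrium continuous-time dynamics with equilibria π^e_1 < … < π^e_k and delimiters δ_1, …, δ_{k−1}, and suppose the joint AA2 maps satisfy the contraction condition |G_A(π,π′) − G_B(π,π′)| ≤ L·|π − π′| for all π ≥ π′ in [0,1] with L ∈ [0,1). Let π_A, π_B : [0,∞) → [0,1] be differentiable solutions of the joint AA2 continuous-time dynamics dπ_A/dt = G_A(π_A, π_B) − π_A, dπ_B/dt = G_B(π_A, π_B) − π_B with π_A(0) ≥ π_B(0), π_A(t) ≥ π_B(t) for all t, π_A(0) ∈ (δ_{j−1}, δ_j) and π_B(0) ∈ (δ_{i−1}, δ_i) with i ≤ j. Then π_A(t) → π^e_j and π_B(t) → π^e_j as t → ∞; in particular, for any g_A ∈ (0,1) and u₁ ≥ 0, the limiting per-step utility u₁·π^e_j of the equalized population is no smaller than the limiting UN utility u₁·(g_A·π^e_j + (1−g_A)·π^e_i). -/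
import Mathlib

open Filter Set Topology

/-- Theorem: AA2 equalizes to the higher equilibrium in continuous time.
Indexing is 0-based: the UN map `f(π) = π·f₁(0,π) + (1−π)·f₀(0,π)` is a k-equilibrium
continuous-time dynamics with equilibria `πe 0 < … < πe (k−1)` and delimiters `δ 0 = 0`,
`δ i ∈ (πe (i−1), πe i)`, `δ k = 1`. If the AA2 maps `G_A(π,π') = π·f₁(0,π)+(1−π)·f₀(0,π)`,
`G_B(π,π') = π'·f₁(π−π',π')+(1−π')·f₀(π−π',π')` satisfy the contraction condition with
`L ∈ [0,1)`, and `π_A, π_B` solve the joint AA2 continuous-time dynamics with `π_A` always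
advantaged, `π_A(0)` in basin `j` and `π_B(0)` in basin `i`, `i ≤ j`, then both groups
converge to `πe j`; in particular the limiting per-step utility of the equalized population
is no smaller than the limiting UN utility. -/
theorem AA2_CT_k_equilibrium_better_equilibrium
    (f₀ f₁ : ℝ → ℝ → ℝ)
    (hmap0 : ∀ x ∈ Set.Icc (0:ℝ) 1, ∀ y ∈ Set.Icc (0:ℝ) 1, f₀ x y ∈ Set.Icc (0:ℝ) 1)
    (hmap1 : ∀ x ∈ Set.Icc (0:ℝ) 1, ∀ y ∈ Set.Icc (0:ℝ) 1, f₁ x y ∈ Set.Icc (0:ℝ) 1)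
    (f : ℝ → ℝ) (hf : ∀ π, f π = π * f₁ 0 π + (1 - π) * f₀ 0 π)
    (k : ℕ) (hk : 0 < k) (πe : ℕ → ℝ) (δ : ℕ → ℝ)
    (hπe_mem : ∀ i < k, πe i ∈ Set.Icc (0:ℝ) 1)
    (hπe_mono : ∀ i, i + 1 < k → πe i < πe (i + 1))
    (hδ0 : δ 0 = 0) (hδk : δ k = 1)
    (hδ : ∀ i, 0 < i → i < k → πe (i - 1) < δ i ∧ δ i < πe i)
    -- f is a k-equilibrium continuous-time dynamics
    (hkeq : ∀ i < k, ∀ x : ℝ → ℝ,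
        (∀ t : ℝ, 0 ≤ t → x t ∈ Set.Icc (0:ℝ) 1) →
        (∀ t : ℝ, 0 ≤ t → HasDerivWithinAt x (f (x t) - x t) (Set.Ici 0) t) →
        ((δ i < x 0 ∧ x 0 < δ (i + 1)) ∨ (i = 0 ∧ x 0 = 0) ∨ (i = k - 1 ∧ x 0 = 1)) →
        Filter.Tendsto x Filter.atTop (nhds (πe i)))
    -- AA2 one-step maps
    (GA GB : ℝ → ℝ → ℝ)
    (hGA : ∀ π π', GA π π' = π * f₁ 0 π + (1 - π) * f₀ 0 π)
    (hGB : ∀ π π', GB π π' = π' * f₁ (π - π') π' + (1 - π') * f₀ (π - π') π')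
    -- the AA2 contraction (equalizing) condition
    (L : ℝ) (hL0 : 0 ≤ L) (hL1 : L < 1)
    (hcontr : ∀ π ∈ Set.Icc (0:ℝ) 1, ∀ π' ∈ Set.Icc (0:ℝ) 1, π' ≤ π →
        |GA π π' - GB π π'| ≤ L * |π - π'|)
    -- joint AA2 continuous-time solutions with A advantaged throughout
    (πA πB : ℝ → ℝ)
    (hmemA : ∀ t : ℝ, 0 ≤ t → πA t ∈ Set.Icc (0:ℝ) 1)
    (hmemB : ∀ t : ℝ, 0 ≤ t → πB t ∈ Set.Icc (0:ℝ) 1)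
    (hodeA : ∀ t : ℝ, 0 ≤ t →
        HasDerivWithinAt πA (GA (πA t) (πB t) - πA t) (Set.Ici 0) t)
    (hodeB : ∀ t : ℝ, 0 ≤ t →
        HasDerivWithinAt πB (GB (πA t) (πB t) - πB t) (Set.Ici 0) t)
    (horder : ∀ t : ℝ, 0 ≤ t → πB t ≤ πA t)
    (i j : ℕ) (hij : i ≤ j) (hjk : j < k)
    (hA0 : (δ j < πA 0 ∧ πA 0 < δ (j + 1)) ∨ (j = 0 ∧ πA 0 = 0) ∨ (j = k - 1 ∧ πA 0 = 1))
    (hB0 : (δ i < πB 0 ∧ πB 0 < δ (i + 1)) ∨ (i = 0 ∧ πB 0 = 0) ∨ (i = k - 1 ∧ πB 0 = 1)) :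
    Filter.Tendsto πA Filter.atTop (nhds (πe j)) ∧
    Filter.Tendsto πB Filter.atTop (nhds (πe j)) ∧
    ∀ gA u₁ : ℝ, gA ∈ Set.Ioo (0:ℝ) 1 → 0 ≤ u₁ →
      u₁ * (gA * πe j + (1 - gA) * πe i) ≤ u₁ * πe j := by
  -- πA solves the UN dynamics
  have hA : Filter.Tendsto πA Filter.atTop (nhds (πe j)) := by
    refine hkeq j hjk πA hmemA (fun t ht => ?_) hA0
    have := hodeA t ht
    rwa [hGA, ← hf] at this
  -- the gap D = πA - πB
  set D : ℝ → ℝ := fun t => πA t - πB t with hD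
  have hDderiv : ∀ t : ℝ, 0 ≤ t → HasDerivWithinAt D
      ((GA (πA t) (πB t) - πA t) - (GB (πA t) (πB t) - πB t)) (Set.Ici 0) t :=
    fun t ht => (hodeA t ht).sub (hodeB t ht)
  have hDnonneg : ∀ t : ℝ, 0 ≤ t → 0 ≤ D t := fun t ht => sub_nonneg.2 (horder t ht)
  have hbound : ∀ t : ℝ, 0 ≤ t →
      (GA (πA t) (πB t) - πA t) - (GB (πA t) (πB t) - πB t) ≤ (L - 1) * D t + 0 := by
    intro t ht
    have h1 := hcontr (πA t) (hmemA t ht) (πB t) (hmemB t ht) (horder t ht)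
    have h2 : GA (πA t) (πB t) - GB (πA t) (πB t) ≤ L * |πA t - πB t| :=
      (le_abs_self _).trans h1
    rw [abs_of_nonneg (hDnonneg t ht)] at h2
    simp only [hD] at h2 ⊢
    linarith
  -- Grönwall: D t ≤ D 0 * exp ((L-1) t)
  have hcont : ContinuousOn D (Set.Ici (0:ℝ)) := fun t ht =>
    (hDderiv t ht).continuousWithinAt
  have key : ∀ t : ℝ, 0 ≤ t → D t ≤ D 0 * Real.exp ((L - 1) * t) := by
    intro b hb
    have H := le_gronwallBound_of_liminf_deriv_right_le (a := 0) (b := b)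
      (f := D) (f' := fun t => (GA (πA t) (πB t) - πA t) - (GB (πA t) (πB t) - πB t))
      (δ := D 0) (K := L - 1) (ε := 0)
      (hcont.mono Set.Icc_subset_Ici_self)
      (fun x hx r hr => (((hDderiv x hx.1).mono (Set.Ici_subset_Ici.2 hx.1)).liminf_right_slope_le hr))
      le_rfl (fun x hx => hbound x hx.1) b ⟨hb, le_rfl⟩
    rwa [sub_zero, gronwallBound_ε0] at H
  have hexp : Filter.Tendsto (fun t => D 0 * Real.exp ((L - 1) * t)) Filter.atTop (nhds 0) := by
    have h1 : Filter.Tendsto (fun t : ℝ => (L - 1) * t) Filter.atTop Filter.atBot :=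
      Filter.Tendsto.const_mul_atTop_of_neg (by linarith) tendsto_id
    have h2 : Filter.Tendsto (fun t : ℝ => Real.exp ((L - 1) * t)) Filter.atTop (nhds 0) :=
      Real.tendsto_exp_atBot.comp h1
    have := h2.const_mul (D 0)
    rwa [mul_zero] at this
  have hDlim : Filter.Tendsto D Filter.atTop (nhds 0) := by
    refine tendsto_of_tendsto_of_tendsto_of_le_of_le' tendsto_const_nhds hexp ?_ ?_
    · filter_upwards [Filter.eventually_ge_atTop (0:ℝ)] with t ht using hDnonneg t ht
    · filter_upwards [Filter.eventually_ge_atTop (0:ℝ)] with t ht using key t ht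
  have hB : Filter.Tendsto πB Filter.atTop (nhds (πe j)) := by
    have := hA.sub hDlim
    rw [sub_zero] at this
    exact this.congr (fun t => by simp [hD])
  refine ⟨hA, hB, ?_⟩
  have hmono : ∀ a b : ℕ, a ≤ b → b < k → πe a ≤ πe b := by
    intro a b hab hbk
    induction b with
    | zero => simp [Nat.le_zero.mp hab]
    | succ n ih =>
      rcases Nat.lt_succ_iff_lt_or_eq.mp (Nat.lt_succ_of_le hab) with h | h
      · exact (ih (Nat.le_of_lt_succ h) (Nat.lt_of_succ_lt hbk)).trans
          (le_of_lt (hπe_mono n hbk))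
      · exact le_of_eq (congrArg πe h)
  have hle : πe i ≤ πe j := hmono i j hij hjk
  intro gA u₁ hgA hu₁
  nlinarith [hgA.1, hgA.2, mul_nonneg hu₁ (sub_nonneg.2 hle)]
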